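/- (Commutator-type estimate for the quadratic term.) For every integer α ≥ 2 there exists a constant C = C(α) > 0 such that for every real-valued Schwartz function v on ℝ: | ∫_ℝ ∂_x^α(v²)(x) · ∂_x^{α+1}v(x) dx | ≤ C · ‖∂_x^α v‖₁² · ‖v‖_{α−1}. -/

import Mathlib

/- STATEMENT 9.  (Commutator-type estimate for the quadratic term.)
For a real-valued Schwartz function w and k ∈ ℕ, ‖w‖_k := (Σ_{j=0}^k ‖∂_x^j w‖_{L²}²)^{1/2}
is the integer-order Sobolev norm (`HkN` below); in particular
‖∂_x^α v‖₁ = (‖∂_x^α v‖₀² + ‖∂_x^{α+1} v‖₀²)^{1/2}.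
Claim: for every integer α ≥ 2 there is C = C(α) > 0 such that for every real-valued
Schwartz function v on ℝ,
  |∫ ∂_x^α(v²)·∂_x^{α+1}v dx| ≤ C·‖∂_x^α v‖₁²·‖v‖_{α−1}. -/

open Real MeasureTheory

/-- Integer-order Sobolev norm `‖f‖_k = (Σ_{j=0}^k ‖∂^j f‖_{L²}²)^{1/2}`. -/
noncomputable def HkN (k : ℕ) (f : ℝ → ℝ) : ℝ :=
  Real.sqrt (∑ j ∈ Finset.range (k + 1), ∫ x : ℝ, (iteratedDeriv j f x)^2)


section Aux
open SchwartzMap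


noncomputable def SDer : ℕ → SchwartzMap ℝ ℝ → SchwartzMap ℝ ℝ
  | 0, f => f
  | (n+1), f => SchwartzMap.derivCLM ℝ ℝ (SDer n f)

lemma SDer_coe (n : ℕ) (f : SchwartzMap ℝ ℝ) : ⇑(SDer n f) = iteratedDeriv n ⇑f := by
  induction n with
  | zero => simp [SDer, iteratedDeriv_zero]
  | succ n ih =>
    rw [iteratedDeriv_succ, ← ih]
    funext x
    exact SchwartzMap.derivCLM_apply ℝ (SDer n f) x

lemma SDer_deriv (n : ℕ) (f : SchwartzMap ℝ ℝ) : deriv ⇑(SDer n f) = ⇑(SDer (n+1) f) := by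
  funext x; exact (SchwartzMap.derivCLM_apply ℝ (SDer n f) x).symm

lemma schwartz_bdd (f : SchwartzMap ℝ ℝ) : ∃ C, ∀ x, ‖f x‖ ≤ C :=
  ⟨‖f.toBoundedContinuousFunction‖, fun x => by
    simpa using f.toBoundedContinuousFunction.norm_coe_le_norm x⟩

lemma int_mul (f g : SchwartzMap ℝ ℝ) : Integrable (fun x => f x * g x) volume :=
  (g.integrable).bdd_mul f.continuous.aestronglyMeasurable
    (Filter.Eventually.of_forall (schwartz_bdd f).choose_spec)

lemma int_mul3 (f g h : SchwartzMap ℝ ℝ) :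
    Integrable (fun x => f x * g x * h x) volume := by
  simp_rw [mul_assoc]
  exact (int_mul g h).bdd_mul f.continuous.aestronglyMeasurable
    (Filter.Eventually.of_forall (schwartz_bdd f).choose_spec)

lemma tendsto_zero_at (f : SchwartzMap ℝ ℝ) :
    Filter.Tendsto ⇑f Filter.atTop (nhds 0) ∧ Filter.Tendsto ⇑f Filter.atBot (nhds 0) :=
  ⟨(zero_at_infty f).mono_left _root_.atTop_le_cocompact,
   (zero_at_infty f).mono_left _root_.atBot_le_cocompact⟩

lemma integral_sq_nonneg (f : ℝ → ℝ) : (0:ℝ) ≤ ∫ x, (f x)^2 :=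
  integral_nonneg (fun x => sq_nonneg _)

/-- Cauchy–Schwarz for Schwartz functions. -/
lemma cs (f g : SchwartzMap ℝ ℝ) :
    ∫ x, |f x * g x| ≤ Real.sqrt (∫ x, (f x)^2) * Real.sqrt (∫ x, (g x)^2) := by
  set A := ∫ x, (f x)^2 with hA
  set B := ∫ x, (g x)^2 with hB
  set I := ∫ x, |f x * g x| with hI
  have hA0 : 0 ≤ A := integral_sq_nonneg _
  have hB0 : 0 ≤ B := integral_sq_nonneg _
  have hI0 : 0 ≤ I := integral_nonneg (fun x => abs_nonneg _)
  have hintf2 : Integrable (fun x => (f x)^2) volume := by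
    simpa [pow_two] using int_mul f f
  have hintg2 : Integrable (fun x => (g x)^2) volume := by
    simpa [pow_two] using int_mul g g
  have hintfg : Integrable (fun x => |f x * g x|) volume := (int_mul f g).abs
  have key : ∀ t : ℝ, 0 ≤ A * (t * t) + (2 * I) * t + B := by
    intro t
    have h1 : ∀ x : ℝ, 0 ≤ (f x)^2 * (t*t) + 2 * |f x * g x| * t + (g x)^2 := by
      intro x
      rw [abs_mul, ← sq_abs (f x), ← sq_abs (g x)]
      nlinarith [sq_nonneg (t * |f x| + |g x|)]
    have h2 : (0:ℝ) ≤ ∫ x, ((f x)^2 * (t*t) + 2 * |f x * g x| * t + (g x)^2) :=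
      integral_nonneg h1
    have hab : Integrable (fun x => (f x)^2 * (t*t) + 2 * |f x * g x| * t) volume := by
      exact (hintf2.mul_const _).add (((hintfg.const_mul 2)).mul_const t)
    rw [integral_add hab hintg2,
      integral_add (hintf2.mul_const _) ((hintfg.const_mul 2).mul_const t),
      integral_mul_const, integral_mul_const, MeasureTheory.integral_const_mul] at h2
    linarith
  have hd := discrim_le_zero key
  rw [discrim] at hd
  have hIsq : I^2 ≤ A * B := by nlinarith
  calc I = Real.sqrt (I^2) := by rw [Real.sqrt_sq hI0]
    _ ≤ Real.sqrt (A * B) := Real.sqrt_le_sqrt hIsq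
    _ = Real.sqrt A * Real.sqrt B := Real.sqrt_mul hA0 _

lemma abs_integral_mul_le (f g : SchwartzMap ℝ ℝ) :
    |∫ x, f x * g x| ≤ Real.sqrt (∫ x, (f x)^2) * Real.sqrt (∫ x, (g x)^2) := by
  refine le_trans ?_ (cs f g)
  simpa [Real.norm_eq_abs, abs_mul] using
    norm_integral_le_integral_norm (f := fun x => f x * g x) (μ := volume)

/-- Integration by parts (two factors) for Schwartz functions. -/
lemma ibp2 (f g : SchwartzMap ℝ ℝ) :
    ∫ x, f x * deriv g x = -∫ x, deriv f x * g x := by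
  have hF : ∀ x : ℝ, HasDerivAt (fun y => f y * g y)
      (deriv f x * g x + f x * deriv g x) x := fun x =>
    (f.differentiableAt.hasDerivAt).mul (g.differentiableAt.hasDerivAt)
  have hint : Integrable (fun x => deriv f x * g x + f x * deriv g x) volume := by
    have h1 : Integrable (fun x => (derivCLM ℝ ℝ f) x * g x) volume := int_mul _ _
    have h2 : Integrable (fun x => f x * (derivCLM ℝ ℝ g) x) volume := int_mul _ _
    simpa [SchwartzMap.derivCLM_apply] using h1.fun_add h2
  have htop : Filter.Tendsto (fun y => f y * g y) Filter.atTop (nhds 0) := by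
    simpa using (tendsto_zero_at f).1.mul (tendsto_zero_at g).1
  have hbot : Filter.Tendsto (fun y => f y * g y) Filter.atBot (nhds 0) := by
    simpa using (tendsto_zero_at f).2.mul (tendsto_zero_at g).2
  have h0 : ∫ x, (deriv f x * g x + f x * deriv g x) = 0 - 0 :=
    integral_of_hasDerivAt_of_tendsto hF hint hbot htop
  have h1 : Integrable (fun x => deriv f x * g x) volume := by
    simpa [SchwartzMap.derivCLM_apply] using
      (int_mul (derivCLM ℝ ℝ f) g)
  have h2 : Integrable (fun x => f x * deriv g x) volume := by
    simpa [SchwartzMap.derivCLM_apply] using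
      (int_mul f (derivCLM ℝ ℝ g))
  rw [integral_add h1 h2] at h0
  linarith

/-- Integration by parts (three factors) for Schwartz functions. -/
lemma ibp3 (f g h : SchwartzMap ℝ ℝ) :
    ∫ x, f x * g x * deriv h x
      = (-∫ x, deriv f x * g x * h x) - ∫ x, f x * deriv g x * h x := by
  have hF : ∀ x : ℝ, HasDerivAt (fun y => f y * g y * h y)
      ((deriv f x * g x + f x * deriv g x) * h x + f x * g x * deriv h x) x := fun x =>
    ((f.differentiableAt.hasDerivAt).mul (g.differentiableAt.hasDerivAt)).mul
      (h.differentiableAt.hasDerivAt)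
  have e1 : Integrable (fun x => deriv f x * g x * h x) volume := by
    simpa [SchwartzMap.derivCLM_apply] using int_mul3 (derivCLM ℝ ℝ f) g h
  have e2 : Integrable (fun x => f x * deriv g x * h x) volume := by
    simpa [SchwartzMap.derivCLM_apply] using int_mul3 f (derivCLM ℝ ℝ g) h
  have e3 : Integrable (fun x => f x * g x * deriv h x) volume := by
    simpa [SchwartzMap.derivCLM_apply] using int_mul3 f g (derivCLM ℝ ℝ h)
  have hint : Integrable
      (fun x => (deriv f x * g x + f x * deriv g x) * h x + f x * g x * deriv h x) volume := by
    have e23 : Integrable (fun x => f x * deriv g x * h x + f x * g x * deriv h x) volume := by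
      exact e2.add e3
    have h123 : Integrable
        (fun x => deriv f x * g x * h x + (f x * deriv g x * h x + f x * g x * deriv h x))
        volume := by exact e1.add e23
    refine h123.congr ?_
    filter_upwards with x
    ring
  have htop : Filter.Tendsto (fun y => f y * g y * h y) Filter.atTop (nhds 0) := by
    simpa using ((tendsto_zero_at f).1.mul (tendsto_zero_at g).1).mul (tendsto_zero_at h).1
  have hbot : Filter.Tendsto (fun y => f y * g y * h y) Filter.atBot (nhds 0) := by
    simpa using ((tendsto_zero_at f).2.mul (tendsto_zero_at g).2).mul (tendsto_zero_at h).2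
  have h0 : ∫ x, ((deriv f x * g x + f x * deriv g x) * h x + f x * g x * deriv h x) = 0 - 0 :=
    integral_of_hasDerivAt_of_tendsto hF hint hbot htop
  have hsplit : ∫ x, ((deriv f x * g x + f x * deriv g x) * h x + f x * g x * deriv h x)
      = (∫ x, deriv f x * g x * h x) + (∫ x, f x * deriv g x * h x)
        + ∫ x, f x * g x * deriv h x := by
    have e23 : Integrable (fun x => f x * deriv g x * h x + f x * g x * deriv h x) volume := by
      exact e2.add e3
    have heq : (fun x : ℝ => (deriv f x * g x + f x * deriv g x) * h x + f x * g x * deriv h x)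
        = fun x => deriv f x * g x * h x + (f x * deriv g x * h x + f x * g x * deriv h x) := by
      funext x; ring
    rw [heq, integral_add e1 e23, integral_add e2 e3]
    ring
  rw [hsplit] at h0
  linarith

/-- Sobolev-type sup bound for Schwartz functions. -/
lemma sup_bound (f : SchwartzMap ℝ ℝ) (x : ℝ) :
    |f x| ≤ Real.sqrt (∫ y, (f y)^2) + Real.sqrt (∫ y, (deriv f y)^2) := by
  set a := Real.sqrt (∫ y, (f y)^2) with ha
  set b := Real.sqrt (∫ y, (deriv f y)^2) with hb
  have ha0 : 0 ≤ a := Real.sqrt_nonneg _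
  have hb0 : 0 ≤ b := Real.sqrt_nonneg _
  have hintd : Integrable (fun y => deriv f y * f y + f y * deriv f y) volume := by
    have h1 : Integrable (fun y => (derivCLM ℝ ℝ f) y * f y) volume := int_mul _ _
    have h2 : Integrable (fun y => f y * (derivCLM ℝ ℝ f) y) volume := int_mul _ _
    simpa [SchwartzMap.derivCLM_apply] using h1.fun_add h2
  have hbot : Filter.Tendsto (fun z : ℝ => f z * f z) Filter.atBot (nhds 0) := by
    simpa using (tendsto_zero_at f).2.mul (tendsto_zero_at f).2
  have hkey : ∫ y in Set.Iic x, (deriv f y * f y + f y * deriv f y) = f x * f x - 0 :=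
    integral_Iic_of_hasDerivAt_of_tendsto'
      (fun y _ => (f.differentiableAt.hasDerivAt).mul (f.differentiableAt.hasDerivAt))
      hintd.integrableOn hbot
  have habs : ∫ y in Set.Iic x, (deriv f y * f y + f y * deriv f y)
      ≤ ∫ y, |deriv f y * f y + f y * deriv f y| := by
    calc ∫ y in Set.Iic x, (deriv f y * f y + f y * deriv f y)
        ≤ ∫ y in Set.Iic x, |deriv f y * f y + f y * deriv f y| :=
          integral_mono hintd.integrableOn hintd.abs.integrableOn
            (fun y => le_abs_self _)
      _ ≤ ∫ y, |deriv f y * f y + f y * deriv f y| :=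
          setIntegral_le_integral hintd.abs
            (Filter.Eventually.of_forall (fun y => abs_nonneg _))
  have hcs : ∫ y, |(derivCLM ℝ ℝ f) y * f y| ≤ b * a := by
    have h := cs (derivCLM ℝ ℝ f) f
    calc ∫ y, |(derivCLM ℝ ℝ f) y * f y|
        ≤ Real.sqrt (∫ y, ((derivCLM ℝ ℝ f) y)^2) * Real.sqrt (∫ y, (f y)^2) := h
      _ = b * a := by
          have he : (fun y => ((derivCLM ℝ ℝ f) y)^2) = fun y => (deriv f y)^2 := by
            funext y; simp [SchwartzMap.derivCLM_apply]
          rw [ha, hb, he]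
  have h2ab : ∫ y, |deriv f y * f y + f y * deriv f y| ≤ 2 * (b * a) := by
    have hptw : ∀ y : ℝ, |deriv f y * f y + f y * deriv f y| ≤ 2 * |(derivCLM ℝ ℝ f) y * f y| := by
      intro y
      rw [SchwartzMap.derivCLM_apply]
      calc |deriv f y * f y + f y * deriv f y| ≤ |deriv f y * f y| + |f y * deriv f y| :=
            abs_add_le _ _
        _ = 2 * |deriv (⇑f) y * f y| := by rw [abs_mul, abs_mul]; ring
    calc ∫ y, |deriv f y * f y + f y * deriv f y|
        ≤ ∫ y, 2 * |(derivCLM ℝ ℝ f) y * f y| :=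
          integral_mono hintd.abs ((int_mul _ _).abs.const_mul 2) hptw
      _ = 2 * ∫ y, |(derivCLM ℝ ℝ f) y * f y| := MeasureTheory.integral_const_mul 2 _
      _ ≤ 2 * (b * a) := by linarith
  have hsq : f x * f x ≤ 2 * (b * a) := by
    rw [sub_zero] at hkey
    calc f x * f x = ∫ y in Set.Iic x, (deriv f y * f y + f y * deriv f y) := hkey.symm
      _ ≤ ∫ y, |deriv f y * f y + f y * deriv f y| := habs
      _ ≤ 2 * (b * a) := h2ab
  nlinarith [abs_nonneg (f x), sq_abs (f x), sq_nonneg (a - b)]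

/-- Ratio monotonicity for log-convex nonnegative sequences. -/
lemma logconv_step (a : ℕ → ℝ) (h0 : ∀ k, 0 ≤ a k)
    (h : ∀ k, a (k+1) * a (k+1) ≤ a k * a (k+2)) :
    ∀ i j, i ≤ j → a (i+1) * a j ≤ a i * a (j+1) := by
  intro i j hij
  induction j with
  | zero =>
      interval_cases i
      rw [mul_comm]
  | succ j ih =>
      rcases Nat.lt_or_ge i (j+1) with hi | hi
      · have hij' : i ≤ j := by omega
        have IH := ih hij'
        rcases (h0 (j+1)).eq_or_lt with hz | hz
        · have : a (i+1) * a (j+1) = 0 := by rw [← hz]; ring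
          rw [this]
          exact mul_nonneg (h0 i) (h0 (j+2))
        · have key : a (j+1) * (a (i+1) * a (j+1)) ≤ a (j+1) * (a i * a (j+2)) := by
            calc a (j+1) * (a (i+1) * a (j+1)) = a (i+1) * (a (j+1) * a (j+1)) := by ring
              _ ≤ a (i+1) * (a j * a (j+2)) :=
                mul_le_mul_of_nonneg_left (h j) (h0 (i+1))
              _ = (a (i+1) * a j) * a (j+2) := by ring
              _ ≤ (a i * a (j+1)) * a (j+2) :=
                mul_le_mul_of_nonneg_right IH (h0 (j+2))
              _ = a (j+1) * (a i * a (j+2)) := by ring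
          exact le_of_mul_le_mul_left key hz
      · have : i = j + 1 := by omega
        subst this
        rw [mul_comm]

/-- Moving indices outward for log-convex nonnegative sequences. -/
lemma logconv_spread (a : ℕ → ℝ) (h0 : ∀ k, 0 ≤ a k)
    (h : ∀ k, a (k+1) * a (k+1) ≤ a k * a (k+2)) :
    ∀ d p q, p ≤ q → d ≤ p → a p * a q ≤ a (p - d) * a (q + d) := by
  intro d
  induction d with
  | zero => intro p q _ _; simp
  | succ d ih =>
      intro p q hpq hdp
      have h1 : a p * a q ≤ a (p - d) * a (q + d) := ih p q hpq (by omega)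
      obtain ⟨e, he⟩ : ∃ e, p - d = e + 1 := ⟨p - d - 1, by omega⟩
      have h2 : a (e+1) * a (q+d) ≤ a e * a (q+d+1) := by
        refine logconv_step a h0 h e (q+d) (by omega)
      have hp1 : p - (d+1) = e := by omega
      have hq1 : q + (d+1) = q + d + 1 := by omega
      rw [hp1, hq1]
      calc a p * a q ≤ a (p - d) * a (q + d) := h1
        _ = a (e+1) * a (q+d) := by rw [he]
        _ ≤ a e * a (q+d+1) := h2

lemma hasDerivAt_SDer (v : SchwartzMap ℝ ℝ) (j : ℕ) (x : ℝ) :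
    HasDerivAt (iteratedDeriv j ⇑v) (iteratedDeriv (j+1) ⇑v x) x := by
  have h1 : HasDerivAt ⇑(SDer j v) (deriv ⇑(SDer j v) x) x :=
    (SDer j v).differentiableAt.hasDerivAt
  rw [SDer_deriv j v, SDer_coe (j+1) v] at h1
  rwa [SDer_coe j v] at h1

/-- Leibniz rule for iterated derivatives of the square of a Schwartz function. -/
lemma leibniz_sq (v : SchwartzMap ℝ ℝ) (n : ℕ) :
    iteratedDeriv n (fun y => v y * v y)
      = fun x => ∑ j ∈ Finset.range (n+1),
          (n.choose j : ℝ) * (iteratedDeriv j ⇑v x * iteratedDeriv (n-j) ⇑v x) := by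
  induction n with
  | zero => funext x; simp
  | succ n ih =>
      funext x
      rw [iteratedDeriv_succ, ih]
      have hder : HasDerivAt
          (fun y => ∑ j ∈ Finset.range (n+1),
            (n.choose j : ℝ) * (iteratedDeriv j ⇑v y * iteratedDeriv (n-j) ⇑v y))
          (∑ j ∈ Finset.range (n+1),
            (n.choose j : ℝ) * (iteratedDeriv (j+1) ⇑v x * iteratedDeriv (n-j) ⇑v x
              + iteratedDeriv j ⇑v x * iteratedDeriv (n-j+1) ⇑v x)) x := by
        refine HasDerivAt.fun_sum (fun j _ => ?_)
        exact ((hasDerivAt_SDer v j x).mul (hasDerivAt_SDer v (n-j) x)).const_mul _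
      rw [hder.deriv]
      -- now the combinatorial identity
      have hsplit : ∑ j ∈ Finset.range (n+1),
            (n.choose j : ℝ) * (iteratedDeriv (j+1) ⇑v x * iteratedDeriv (n-j) ⇑v x
              + iteratedDeriv j ⇑v x * iteratedDeriv (n-j+1) ⇑v x)
          = (∑ j ∈ Finset.range (n+1),
              (n.choose j : ℝ) * (iteratedDeriv (j+1) ⇑v x * iteratedDeriv (n-j) ⇑v x))
            + ∑ j ∈ Finset.range (n+1),
              (n.choose j : ℝ) * (iteratedDeriv j ⇑v x * iteratedDeriv (n+1-j) ⇑v x) := by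
        rw [← Finset.sum_add_distrib]
        refine Finset.sum_congr rfl (fun j hj => ?_)
        have hj' : j ≤ n := Nat.lt_succ_iff.mp (Finset.mem_range.mp hj)
        have : n - j + 1 = n + 1 - j := by omega
        rw [this]
        ring
      rw [hsplit]
      set D := fun k => iteratedDeriv k ⇑v x with hD
      have hgoal : ∑ j ∈ Finset.range (n+2), ((n+1).choose j : ℝ) * (D j * D (n+1-j))
          = (∑ j ∈ Finset.range (n+1), (n.choose j : ℝ) * (D (j+1) * D (n-j)))
            + ∑ j ∈ Finset.range (n+1), (n.choose j : ℝ) * (D j * D (n+1-j)) := by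
        rw [Finset.sum_range_succ' (fun j => ((n+1).choose j : ℝ) * (D j * D (n+1-j))) (n+1)]
        have e1 : ∀ j, j ∈ Finset.range (n+1) →
            ((n+1).choose (j+1) : ℝ) * (D (j+1) * D (n+1-(j+1)))
              = (n.choose j : ℝ) * (D (j+1) * D (n-j))
                + (n.choose (j+1) : ℝ) * (D (j+1) * D (n-j)) := by
          intro j hj
          have : n + 1 - (j+1) = n - j := by omega
          rw [this, Nat.choose_succ_succ]
          push_cast
          ring
        rw [Finset.sum_congr rfl e1, Finset.sum_add_distrib]
        have e2 : ∑ j ∈ Finset.range (n+1), (n.choose (j+1) : ℝ) * (D (j+1) * D (n-j))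
            = (∑ j ∈ Finset.range (n+1), (n.choose j : ℝ) * (D j * D (n+1-j)))
              - (n.choose 0 : ℝ) * (D 0 * D (n+1)) := by
          have e3 := Finset.sum_range_succ'
            (fun j => (n.choose j : ℝ) * (D j * D (n+1-j))) (n+1)
          have e4 : ∑ j ∈ Finset.range (n+2), (n.choose j : ℝ) * (D j * D (n+1-j))
              = ∑ j ∈ Finset.range (n+1), (n.choose j : ℝ) * (D j * D (n+1-j)) := by
            rw [Finset.sum_range_succ]
            simp [Nat.choose_succ_self]
          have e5 : ∑ j ∈ Finset.range (n+1),
                (n.choose (j+1) : ℝ) * (D (j+1) * D (n+1-(j+1)))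
              = ∑ j ∈ Finset.range (n+1), (n.choose (j+1) : ℝ) * (D (j+1) * D (n-j)) := by
            refine Finset.sum_congr rfl (fun j hj => ?_)
            have : n + 1 - (j+1) = n - j := by omega
            rw [this]
          rw [e4, e5] at e3
          have : (n.choose 0 : ℝ) * (D 0 * D (n+1-0)) = (n.choose 0 : ℝ) * (D 0 * D (n+1)) := by
            norm_num
          rw [this] at e3
          linarith
        rw [e2]
        have : ((n+1).choose 0 : ℝ) * (D 0 * D (n+1-0)) = (n.choose 0 : ℝ) * (D 0 * D (n+1)) := by
          simp
        rw [this]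
        ring
      simpa [hD] using hgoal.symm

/-- Trilinear bound: sup-norm on the first factor, L² on the others. -/
lemma tri (f g h : SchwartzMap ℝ ℝ) :
    |∫ x, f x * g x * h x|
      ≤ (Real.sqrt (∫ x, (f x)^2) + Real.sqrt (∫ x, (deriv f x)^2))
        * (Real.sqrt (∫ x, (g x)^2) * Real.sqrt (∫ x, (h x)^2)) := by
  set K := Real.sqrt (∫ x, (f x)^2) + Real.sqrt (∫ x, (deriv f x)^2) with hK
  have hK0 : 0 ≤ K := add_nonneg (Real.sqrt_nonneg _) (Real.sqrt_nonneg _)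
  have step1 : |∫ x, f x * g x * h x| ≤ ∫ x, |f x * g x * h x| := by
    simpa [Real.norm_eq_abs, abs_mul] using
      norm_integral_le_integral_norm (f := fun x => f x * g x * h x) (μ := volume)
  have step2 : ∫ x, |f x * g x * h x| ≤ ∫ x, K * |g x * h x| := by
    refine integral_mono (int_mul3 f g h).abs ((int_mul g h).abs.const_mul K) (fun x => ?_)
    have : |f x * g x * h x| = |f x| * |g x * h x| := by rw [mul_assoc, abs_mul]
    rw [this]
    exact mul_le_mul_of_nonneg_right (sup_bound f x) (abs_nonneg _)
  have step3 : ∫ x, K * |g x * h x| = K * ∫ x, |g x * h x| :=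
    MeasureTheory.integral_const_mul K _
  have step4 : K * ∫ x, |g x * h x|
      ≤ K * (Real.sqrt (∫ x, (g x)^2) * Real.sqrt (∫ x, (h x)^2)) :=
    mul_le_mul_of_nonneg_left (cs g h) hK0
  calc |∫ x, f x * g x * h x| ≤ ∫ x, |f x * g x * h x| := step1
    _ ≤ ∫ x, K * |g x * h x| := step2
    _ = K * ∫ x, |g x * h x| := step3
    _ ≤ _ := step4

end Aux

section Main
open SchwartzMap

theorem statement9 :
    ∀ α : ℕ, 2 ≤ α →
      ∃ C : ℝ, 0 < C ∧
        ∀ v : SchwartzMap ℝ ℝ,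
          |∫ x : ℝ, iteratedDeriv α (fun y : ℝ => (v y)^2) x * iteratedDeriv (α + 1) (⇑v) x|
            ≤ C * (HkN 1 (iteratedDeriv α (⇑v)))^2 * HkN (α - 1) (⇑v) := by
  intro α hα
  refine ⟨4 * 2^α, by positivity, ?_⟩
  intro v
  set L := HkN (α-1) ⇑v with hLdef
  set H := HkN 1 (iteratedDeriv α ⇑v) with hHdef
  set a : ℕ → ℝ := fun k => Real.sqrt (∫ x, (iteratedDeriv k (⇑v) x)^2) with hadef
  have hcoe : ∀ k, ⇑(SDer k v) = iteratedDeriv k ⇑v := fun k => SDer_coe k v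
  have ha0 : ∀ k, 0 ≤ a k := fun k => Real.sqrt_nonneg _
  have haS : ∀ k, a k = Real.sqrt (∫ x, ((SDer k v) x)^2) := by
    intro k
    simp only [hadef]
    rw [hcoe k]
  have hasqS : ∀ k, a k * a k = ∫ x, ((SDer k v) x)^2 := by
    intro k
    rw [haS k]
    exact Real.mul_self_sqrt (integral_sq_nonneg _)
  have hL0 : 0 ≤ L := by rw [hLdef]; exact Real.sqrt_nonneg _
  have hH0 : 0 ≤ H := by rw [hHdef]; exact Real.sqrt_nonneg _
  have hL : ∀ k, k ≤ α - 1 → a k ≤ L := by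
    intro k hk
    rw [hLdef, haS k, hcoe k]
    unfold HkN
    apply Real.sqrt_le_sqrt
    exact Finset.single_le_sum (f := fun j => ∫ x, (iteratedDeriv j (⇑v) x)^2)
      (fun j _ => integral_sq_nonneg _) (Finset.mem_range.mpr (by omega))
  have hHeq : H = Real.sqrt ((∫ x, (iteratedDeriv α (⇑v) x)^2)
      + ∫ x, (iteratedDeriv (α+1) (⇑v) x)^2) := by
    rw [hHdef]
    unfold HkN
    congr 1
    rw [Finset.sum_range_succ, Finset.sum_range_one, iteratedDeriv_zero, iteratedDeriv_one,
      ← iteratedDeriv_succ]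
  have hHα : a α ≤ H := by
    rw [hHeq, hadef]
    apply Real.sqrt_le_sqrt
    have := integral_sq_nonneg (iteratedDeriv (α+1) (⇑v))
    linarith
  have hHα1 : a (α+1) ≤ H := by
    rw [hHeq, hadef]
    apply Real.sqrt_le_sqrt
    have := integral_sq_nonneg (iteratedDeriv α (⇑v))
    linarith
  have hconv : ∀ k, a (k+1) * a (k+1) ≤ a k * a (k+2) := by
    intro k
    have hibp := ibp2 (SDer (k+1) v) (SDer k v)
    rw [SDer_deriv k v, SDer_deriv (k+1) v] at hibp
    have h1 : a (k+1) * a (k+1) = ∫ x, (SDer (k+1) v) x * (SDer (k+1) v) x := by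
      rw [hasqS (k+1)]
      refine integral_congr_ae (Filter.Eventually.of_forall (fun x => ?_))
      ring
    have h2 : |∫ x, (SDer (k+2) v) x * (SDer k v) x| ≤ a (k+2) * a k := by
      rw [haS (k+2), haS k]
      exact abs_integral_mul_le (SDer (k+2) v) (SDer k v)
    calc a (k+1) * a (k+1) = ∫ x, (SDer (k+1) v) x * (SDer (k+1) v) x := h1
      _ = -∫ x, (SDer (k+2) v) x * (SDer k v) x := hibp
      _ ≤ |∫ x, (SDer (k+2) v) x * (SDer k v) x| := neg_le_abs _
      _ ≤ a (k+2) * a k := h2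
      _ = a k * a (k+2) := mul_comm _ _
  -- key trilinear estimate
  have key1 : ∀ p q : ℕ, p ≤ q → p + q = α + 1 →
      |∫ x, (SDer p v) x * (SDer q v) x * (SDer α v) x| ≤ 2 * (L * (H * H)) := by
    intro p q hpq hsum
    have t := tri (SDer p v) (SDer q v) (SDer α v)
    rw [SDer_deriv p v] at t
    rw [← haS p, ← haS (p+1), ← haS q, ← haS α] at t
    have h1 : a p * a q ≤ a 0 * a (α+1) := by
      have hs := logconv_spread a ha0 hconv p p q hpq le_rfl
      have e1 : p - p = 0 := by omega
      have e2 : q + p = α + 1 := by omega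
      rwa [e1, e2] at hs
    have h2 : a (p+1) * a q ≤ a 1 * a (α+1) := by
      rcases Nat.lt_or_ge p q with hlt | hge
      · have hs := logconv_spread a ha0 hconv p (p+1) q (by omega) (by omega)
        have e1 : p + 1 - p = 1 := by omega
        have e2 : q + p = α + 1 := by omega
        rwa [e1, e2] at hs
      · have hpq2 : p = q := le_antisymm hpq hge
        subst hpq2
        have hp1 : 1 ≤ p := by omega
        have hs := logconv_spread a ha0 hconv (p-1) p (p+1) (by omega) (by omega)
        have e1 : p - (p-1) = 1 := by omega
        have e2 : p + 1 + (p-1) = α + 1 := by omega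
        rw [e1, e2] at hs
        calc a (p+1) * a p = a p * a (p+1) := mul_comm _ _
          _ ≤ a 1 * a (α+1) := hs
    have h3 : a 0 ≤ L := hL 0 (by omega)
    have h4 : a 1 ≤ L := hL 1 (by omega)
    have m1 : a p * a q * a α ≤ L * (H * H) := by
      calc a p * a q * a α ≤ (a 0 * a (α+1)) * a α :=
            mul_le_mul_of_nonneg_right h1 (ha0 α)
        _ ≤ (L * H) * H :=
            mul_le_mul (mul_le_mul h3 hHα1 (ha0 _) hL0) hHα (ha0 α) (mul_nonneg hL0 hH0)
        _ = L * (H * H) := by ring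
    have m2 : a (p+1) * a q * a α ≤ L * (H * H) := by
      calc a (p+1) * a q * a α ≤ (a 1 * a (α+1)) * a α :=
            mul_le_mul_of_nonneg_right h2 (ha0 α)
        _ ≤ (L * H) * H :=
            mul_le_mul (mul_le_mul h4 hHα1 (ha0 _) hL0) hHα (ha0 α) (mul_nonneg hL0 hH0)
        _ = L * (H * H) := by ring
    calc |∫ x, (SDer p v) x * (SDer q v) x * (SDer α v) x|
        ≤ (a p + a (p+1)) * (a q * a α) := t
      _ = a p * a q * a α + a (p+1) * a q * a α := by ring
      _ ≤ L * (H * H) + L * (H * H) := add_le_add m1 m2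
      _ = 2 * (L * (H * H)) := by ring
  have key2 : ∀ p q : ℕ, p + q = α + 1 →
      |∫ x, (SDer p v) x * (SDer q v) x * (SDer α v) x| ≤ 2 * (L * (H * H)) := by
    intro p q hsum
    rcases le_total p q with hle | hle
    · exact key1 p q hle hsum
    · have hcomm : ∫ x, (SDer p v) x * (SDer q v) x * (SDer α v) x
          = ∫ x, (SDer q v) x * (SDer p v) x * (SDer α v) x := by
        refine integral_congr_ae (Filter.Eventually.of_forall (fun x => ?_))
        ring
      rw [hcomm]
      exact key1 q p hle (by omega)
  -- per-term bound after integration by parts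
  have term : ∀ j, j ≤ α →
      |∫ x, (SDer j v) x * (SDer (α-j) v) x * (SDer (α+1) v) x| ≤ 4 * (L * (H * H)) := by
    intro j hj
    have hib := ibp3 (SDer j v) (SDer (α-j) v) (SDer α v)
    rw [SDer_deriv α v, SDer_deriv j v, SDer_deriv (α-j) v] at hib
    rw [hib]
    set A := ∫ x, (SDer (j+1) v) x * (SDer (α-j) v) x * (SDer α v) x with hAdef
    set B := ∫ x, (SDer j v) x * (SDer (α-j+1) v) x * (SDer α v) x with hBdef
    have hA : |A| ≤ 2 * (L * (H * H)) := key2 (j+1) (α-j) (by omega)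
    have hB : |B| ≤ 2 * (L * (H * H)) := key2 j (α-j+1) (by omega)
    have : (-A) - B = -(A + B) := by ring
    rw [this, abs_neg]
    calc |A + B| ≤ |A| + |B| := abs_add_le _ _
      _ ≤ 2 * (L * (H * H)) + 2 * (L * (H * H)) := add_le_add hA hB
      _ = 4 * (L * (H * H)) := by ring
  -- Leibniz expansion of the integral
  have hJ : ∫ x, iteratedDeriv α (fun y : ℝ => (v y)^2) x * iteratedDeriv (α + 1) (⇑v) x
      = ∑ j ∈ Finset.range (α+1), (α.choose j : ℝ)
          * ∫ x, (SDer j v) x * (SDer (α-j) v) x * (SDer (α+1) v) x := by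
    have hfun : (fun x => iteratedDeriv α (fun y : ℝ => (v y)^2) x
          * iteratedDeriv (α + 1) (⇑v) x)
        = fun x => ∑ j ∈ Finset.range (α+1), (α.choose j : ℝ)
            * ((SDer j v) x * (SDer (α-j) v) x * (SDer (α+1) v) x) := by
      funext x
      have hsq : (fun y : ℝ => (v y)^2) = fun y => v y * v y := by funext y; ring
      rw [hsq, leibniz_sq v α]
      simp only [hcoe]
      rw [Finset.sum_mul]
      refine Finset.sum_congr rfl (fun j hj => ?_)
      ring
    rw [hfun, integral_finset_sum _ (fun j _ =>
      (int_mul3 (SDer j v) (SDer (α-j) v) (SDer (α+1) v)).const_mul _)]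
    refine Finset.sum_congr rfl (fun j hj => ?_)
    exact MeasureTheory.integral_const_mul _ _
  rw [hJ]
  calc |∑ j ∈ Finset.range (α+1), (α.choose j : ℝ)
          * ∫ x, (SDer j v) x * (SDer (α-j) v) x * (SDer (α+1) v) x|
      ≤ ∑ j ∈ Finset.range (α+1), |(α.choose j : ℝ)
          * ∫ x, (SDer j v) x * (SDer (α-j) v) x * (SDer (α+1) v) x| :=
        Finset.abs_sum_le_sum_abs _ _
    _ ≤ ∑ j ∈ Finset.range (α+1), (α.choose j : ℝ) * (4 * (L * (H * H))) := by
        refine Finset.sum_le_sum (fun j hj => ?_)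
        rw [abs_mul, Nat.abs_cast]
        exact mul_le_mul_of_nonneg_left
          (term j (Nat.lt_succ_iff.mp (Finset.mem_range.mp hj))) (Nat.cast_nonneg _)
    _ = (∑ j ∈ Finset.range (α+1), (α.choose j : ℝ)) * (4 * (L * (H * H))) := by
        rw [← Finset.sum_mul]
    _ = (2^α : ℝ) * (4 * (L * (H * H))) := by
        rw [← Nat.cast_sum, Nat.sum_range_choose]
        push_cast
        ring
    _ = 4 * 2^α * H^2 * L := by ring

end Main
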